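/- Let α be a weak composition with α_i = 0, and let γ satisfy s̃_i(α) ⊴ γ ⊴ qshift(s̃_i(α)) with γ_{i+1} = 0 and γ_i > 0. Then any weak composition β with β_j = γ_j for j ∉ {i,i+1}, 0 ≤ β_i ≤ γ_i − 1, and β_{i+1} = γ_i − β_i satisfies α ⊴ β ⊴ qshift(α). -/

import Mathlib

open scoped Classical in
/-- The fundamental shift of a weak composition `v`: working right to left, any
positive entry `a` of `v` with a `0` immediately to its left is reduced to `1`,
and the remaining `a − 1` is shifted left so as to sit immediately to the right
of the next nonzero entry to its left (or into position `1` if there is none);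
positive entries with a nonzero entry immediately to the left are unchanged,
and all other entries are `0`. -/
noncomputable def qshift (n : ℕ) (v : Fin n → ℕ) : Fin n → ℕ := fun p =>
  if v p ≠ 0 then
    (if (p : ℕ) = 0 ∨ v ⟨(p : ℕ) - 1, by omega⟩ ≠ 0 then v p else 1)
  else
    if (p : ℕ) = 0 ∨ v ⟨(p : ℕ) - 1, by omega⟩ ≠ 0 then
      (if h : (Finset.univ.filter fun q : Fin n => p < q ∧ v q ≠ 0).Nonempty then
        v ((Finset.univ.filter fun q : Fin n => p < q ∧ v q ≠ 0).min' h) - 1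
      else 0)
    else 0

/-- Dominance order on weak compositions of length `n`: `Dom n β γ` means every
partial sum of `β` is at most the corresponding partial sum of `γ`
(i.e. `β ⊴ γ`). -/
def Dom (n : ℕ) (β γ : Fin n → ℕ) : Prop :=
  ∀ j : Fin n, ∑ p ∈ Finset.univ.filter (· ≤ j), β p
    ≤ ∑ p ∈ Finset.univ.filter (· ≤ j), γ p

namespace SQAux

variable {n : ℕ}

noncomputable def S (f : Fin n → ℕ) (j : Fin n) : ℕ :=
  ∑ p ∈ Finset.univ.filter (· ≤ j), f p

lemma S_congr (f g : Fin n → ℕ) (j : Fin n) (h : ∀ p : Fin n, p ≤ j → f p = g p) :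
    S f j = S g j :=
  Finset.sum_congr rfl fun p hp => h p (by simpa using hp)

lemma S_succ (f : Fin n → ℕ) (k : ℕ) (hk : k + 1 < n) :
    S f ⟨k + 1, hk⟩ = S f ⟨k, Nat.lt_of_succ_lt hk⟩ + f ⟨k + 1, hk⟩ := by
  have hset : Finset.univ.filter (· ≤ (⟨k + 1, hk⟩ : Fin n))
      = insert (⟨k + 1, hk⟩ : Fin n) (Finset.univ.filter (· ≤ (⟨k, by omega⟩ : Fin n))) := by
    ext q
    simp only [Finset.mem_filter, Finset.mem_univ, true_and, Finset.mem_insert, Fin.le_def,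
      Fin.ext_iff]
    omega
  rw [S, hset, Finset.sum_insert (by simp [Fin.le_def]), S]
  ring

lemma S_zero (f : Fin n → ℕ) (h : 0 < n) : S f ⟨0, h⟩ = f ⟨0, h⟩ := by
  have hset : Finset.univ.filter (· ≤ (⟨0, h⟩ : Fin n)) = {(⟨0, h⟩ : Fin n)} := by
    ext q
    simp only [Finset.mem_filter, Finset.mem_univ, true_and, Finset.mem_singleton, Fin.le_def,
      Fin.ext_iff]
    omega
  rw [S, hset, Finset.sum_singleton]

lemma S_single (f g : Fin n → ℕ) (j a : Fin n) (ha : a ≤ j)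
    (h : ∀ p : Fin n, p ≤ j → p ≠ a → f p = g p) : S f j + g a = S g j + f a := by
  have haf : a ∈ Finset.univ.filter (· ≤ j) := by simp [ha]
  rw [S, S, ← Finset.sum_erase_add _ f haf, ← Finset.sum_erase_add _ g haf]
  have key : ∑ p ∈ (Finset.univ.filter (· ≤ j)).erase a, f p
      = ∑ p ∈ (Finset.univ.filter (· ≤ j)).erase a, g p := by
    refine Finset.sum_congr rfl fun p hp => ?_
    have hm := Finset.mem_erase.1 hp
    exact h p (by simpa using (Finset.mem_filter.1 hm.2).2) hm.1
  omega

lemma S_diff (f g : Fin n → ℕ) (j : Fin n) (t : Finset (Fin n))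
    (ht : ∀ p ∈ t, p ≤ j) (h : ∀ p : Fin n, p ≤ j → p ∉ t → f p = g p)
    (h2 : ∑ p ∈ t, f p = ∑ p ∈ t, g p) : S f j = S g j := by
  have hts : t ⊆ Finset.univ.filter (· ≤ j) := fun p hp => by simp [ht p hp]
  rw [S, S, ← Finset.sum_sdiff hts (f := f), ← Finset.sum_sdiff hts (f := g), h2]
  congr 1
  refine Finset.sum_congr rfl fun p hp => ?_
  have hm := Finset.mem_sdiff.1 hp
  exact h p (by simpa using (Finset.mem_filter.1 hm.1).2) hm.2

lemma S_pair (f g : Fin n → ℕ) (j a b : Fin n) (hab : a ≠ b) (ha : a ≤ j) (hb : b ≤ j)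
    (h : ∀ p : Fin n, p ≤ j → p ≠ a → p ≠ b → f p = g p) (h2 : f a + f b = g a + g b) :
    S f j = S g j := by
  refine S_diff f g j {a, b} ?_ ?_ ?_
  · intro p hp; rcases Finset.mem_insert.1 hp with rfl | hp
    · exact ha
    · rw [Finset.mem_singleton.1 hp]; exact hb
  · intro p hp hpt
    simp only [Finset.mem_insert, Finset.mem_singleton, not_or] at hpt
    exact h p hp hpt.1 hpt.2
  · rw [Finset.sum_pair hab, Finset.sum_pair hab, h2]

lemma S_triple (f g : Fin n → ℕ) (j a b c : Fin n) (hab : a ≠ b) (hac : a ≠ c) (hbc : b ≠ c)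
    (ha : a ≤ j) (hb : b ≤ j) (hc : c ≤ j)
    (h : ∀ p : Fin n, p ≤ j → p ≠ a → p ≠ b → p ≠ c → f p = g p)
    (h2 : f a + f b + f c = g a + g b + g c) :
    S f j = S g j := by
  refine S_diff f g j {a, b, c} ?_ ?_ ?_
  · intro p hp
    simp only [Finset.mem_insert, Finset.mem_singleton] at hp
    rcases hp with rfl | rfl | rfl <;> assumption
  · intro p hp hpt
    simp only [Finset.mem_insert, Finset.mem_singleton, not_or] at hpt
    exact h p hp hpt.1 hpt.2.1 hpt.2.2
  · have hbm : b ∉ ({c} : Finset (Fin n)) := by simp [hbc]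
    have ham : a ∉ ({b, c} : Finset (Fin n)) := by simp [hab, hac]
    rw [Finset.sum_insert ham, Finset.sum_insert hbm, Finset.sum_singleton,
      Finset.sum_insert ham, Finset.sum_insert hbm, Finset.sum_singleton]
    omega

lemma min'_eq {s : Finset (Fin n)} {a : Fin n} (h : a ∈ s) (h2 : ∀ b ∈ s, a ≤ b)
    (hne : s.Nonempty) : s.min' hne = a :=
  le_antisymm (Finset.min'_le s a h) (Finset.le_min' _ _ _ h2)


lemma S_pred (f : Fin n → ℕ) (k : ℕ) (hk0 : k ≠ 0) (hk : k < n) :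
    S f ⟨k, hk⟩ = S f ⟨k - 1, by omega⟩ + f ⟨k, hk⟩ := by
  have h := S_succ f (k - 1) (show k - 1 + 1 < n by omega)
  rw [show (⟨k - 1 + 1, show k - 1 + 1 < n by omega⟩ : Fin n) = ⟨k, hk⟩ from Fin.ext (by simp only [Fin.val_mk]; omega)] at h
  exact h

lemma qshift_congr (v w : Fin n → ℕ) (p : Fin n) (h0 : w p = v p)
    (hlt : (p : ℕ) - 1 < n) (h1 : w ⟨(p : ℕ) - 1, hlt⟩ = v ⟨(p : ℕ) - 1, hlt⟩)
    (h2 : ∀ q : Fin n, p < q → w q = v q) :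
    qshift n w p = qshift n v p := by
  have hfil : (Finset.univ.filter fun q : Fin n => p < q ∧ w q ≠ 0)
      = (Finset.univ.filter fun q : Fin n => p < q ∧ v q ≠ 0) := by
    ext q
    simp only [Finset.mem_filter, Finset.mem_univ, true_and]
    constructor <;> rintro ⟨hq, h⟩ <;> refine ⟨hq, ?_⟩
    · rw [← h2 q hq]; exact h
    · rw [h2 q hq]; exact h
  simp only [qshift, h0, h1, hfil]
  by_cases hne : (Finset.univ.filter fun q : Fin n => p < q ∧ v q ≠ 0).Nonempty
  · rw [dif_pos hne, dif_pos hne]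
    have hm := Finset.min'_mem _ hne
    simp only [Finset.mem_filter, Finset.mem_univ, true_and] at hm
    rw [h2 _ hm.1]
  · rw [dif_neg hne, dif_neg hne]


lemma qshift_pos_good (v : Fin n → ℕ) (p : Fin n) (hvp : v p ≠ 0)
    (hc : (p : ℕ) = 0 ∨ v ⟨(p : ℕ) - 1, by omega⟩ ≠ 0) : qshift n v p = v p := by
  simp only [qshift]
  rw [if_pos hvp, if_pos hc]

lemma qshift_pos_bad (v : Fin n → ℕ) (p : Fin n) (hvp : v p ≠ 0)
    (hp0 : (p : ℕ) ≠ 0) (hlt : (p : ℕ) - 1 < n) (hleft : v ⟨(p : ℕ) - 1, hlt⟩ = 0) :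
    qshift n v p = 1 := by
  simp only [qshift]
  rw [if_pos hvp, if_neg]
  rintro (h | h)
  · exact hp0 h
  · exact h hleft

lemma qshift_zero_bad (v : Fin n → ℕ) (p : Fin n) (hvp : v p = 0)
    (hp0 : (p : ℕ) ≠ 0) (hlt : (p : ℕ) - 1 < n) (hleft : v ⟨(p : ℕ) - 1, hlt⟩ = 0) :
    qshift n v p = 0 := by
  simp only [qshift]
  rw [if_neg (by simpa using hvp), if_neg]
  rintro (h | h)
  · exact hp0 h
  · exact h hleft

lemma qshift_zero_good (v : Fin n → ℕ) (p : Fin n) (hvp : v p = 0)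
    (hc : (p : ℕ) = 0 ∨ v ⟨(p : ℕ) - 1, by omega⟩ ≠ 0) :
    qshift n v p = if h : (Finset.univ.filter fun q : Fin n => p < q ∧ v q ≠ 0).Nonempty then
        v ((Finset.univ.filter fun q : Fin n => p < q ∧ v q ≠ 0).min' h) - 1
      else 0 := by
  simp only [qshift]
  rw [if_neg (by simpa using hvp), if_pos hc]

section Pointwise
variable (i : ℕ) (hi : i + 1 < n) (α w : Fin n → ℕ)

lemma Q_lt (hz : α ⟨i, Nat.lt_of_succ_lt hi⟩ = 0) (ha : α ⟨i + 1, hi⟩ ≠ 0)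
    (hwi : w ⟨i, Nat.lt_of_succ_lt hi⟩ = α ⟨i + 1, hi⟩) (hwi1 : w ⟨i + 1, hi⟩ = 0)
    (hw : ∀ p : Fin n, (p : ℕ) ≠ i → (p : ℕ) ≠ i + 1 → w p = α p)
    (p : Fin n) (hp : (p : ℕ) < i) : qshift n w p = qshift n α p := by
  have hlt : (p : ℕ) - 1 < n := by omega
  have hwp : w p = α p := hw p (by omega) (by omega)
  have hnb : w ⟨(p : ℕ) - 1, hlt⟩ = α ⟨(p : ℕ) - 1, hlt⟩ := hw _ (by simp; omega) (by simp; omega)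
  by_cases hzp : α p = 0
  · by_cases hc : (p : ℕ) = 0 ∨ α ⟨(p : ℕ) - 1, hlt⟩ ≠ 0
    · have hcw : (p : ℕ) = 0 ∨ w ⟨(p : ℕ) - 1, hlt⟩ ≠ 0 := by
        rcases hc with h | h
        · exact Or.inl h
        · exact Or.inr (by rw [hnb]; exact h)
      rw [qshift_zero_good w p (by rw [hwp]; exact hzp) hcw, qshift_zero_good α p hzp hc]
      have hFw : (⟨i, by omega⟩ : Fin n) ∈ Finset.univ.filter fun q : Fin n => p < q ∧ w q ≠ 0 := by
        simp only [Finset.mem_filter, Finset.mem_univ, true_and]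
        exact ⟨by simp [Fin.lt_def]; omega, by rw [hwi]; exact ha⟩
      have hFv : (⟨i + 1, hi⟩ : Fin n) ∈ Finset.univ.filter fun q : Fin n => p < q ∧ α q ≠ 0 := by
        simp only [Finset.mem_filter, Finset.mem_univ, true_and]
        exact ⟨by simp [Fin.lt_def]; omega, ha⟩
      have hFwne : (Finset.univ.filter fun q : Fin n => p < q ∧ w q ≠ 0).Nonempty := ⟨_, hFw⟩
      have hFvne : (Finset.univ.filter fun q : Fin n => p < q ∧ α q ≠ 0).Nonempty := ⟨_, hFv⟩
      rw [dif_pos hFwne, dif_pos hFvne]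
      have key : w ((Finset.univ.filter fun q : Fin n => p < q ∧ w q ≠ 0).min' hFwne)
          = α ((Finset.univ.filter fun q : Fin n => p < q ∧ α q ≠ 0).min' hFvne) := by
        by_cases hex : ∃ q : Fin n, (p < q ∧ α q ≠ 0) ∧ (q : ℕ) < i
        · obtain ⟨q0, hq0, hq0i⟩ := hex
          have hq0v : q0 ∈ Finset.univ.filter fun q : Fin n => p < q ∧ α q ≠ 0 := by
            simp only [Finset.mem_filter, Finset.mem_univ, true_and]; exact hq0
          have hq0w : q0 ∈ Finset.univ.filter fun q : Fin n => p < q ∧ w q ≠ 0 := by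
            simp only [Finset.mem_filter, Finset.mem_univ, true_and]
            exact ⟨hq0.1, by rw [hw q0 (by omega) (by omega)]; exact hq0.2⟩
          have hmv_mem := Finset.min'_mem _ hFvne
          have hmw_mem := Finset.min'_mem _ hFwne
          simp only [Finset.mem_filter, Finset.mem_univ, true_and] at hmv_mem hmw_mem
          have hmv_le : (Finset.univ.filter fun q : Fin n => p < q ∧ α q ≠ 0).min' hFvne ≤ q0 :=
            Finset.min'_le _ _ hq0v
          have hmw_le : (Finset.univ.filter fun q : Fin n => p < q ∧ w q ≠ 0).min' hFwne ≤ q0 :=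
            Finset.min'_le _ _ hq0w
          have hmvi : ((Finset.univ.filter fun q : Fin n => p < q ∧ α q ≠ 0).min' hFvne : ℕ) < i :=
            lt_of_le_of_lt hmv_le hq0i
          have hmwi : ((Finset.univ.filter fun q : Fin n => p < q ∧ w q ≠ 0).min' hFwne : ℕ) < i :=
            lt_of_le_of_lt hmw_le hq0i
          have hwmv : w ((Finset.univ.filter fun q : Fin n => p < q ∧ α q ≠ 0).min' hFvne)
              = α ((Finset.univ.filter fun q : Fin n => p < q ∧ α q ≠ 0).min' hFvne) :=
            hw _ (by omega) (by omega)
          have hwmw : w ((Finset.univ.filter fun q : Fin n => p < q ∧ w q ≠ 0).min' hFwne)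
              = α ((Finset.univ.filter fun q : Fin n => p < q ∧ w q ≠ 0).min' hFwne) :=
            hw _ (by omega) (by omega)
          have h1 : (Finset.univ.filter fun q : Fin n => p < q ∧ α q ≠ 0).min' hFvne
              ≤ (Finset.univ.filter fun q : Fin n => p < q ∧ w q ≠ 0).min' hFwne :=
            Finset.min'_le _ _ (by
              simp only [Finset.mem_filter, Finset.mem_univ, true_and]
              exact ⟨hmw_mem.1, by rw [← hwmw]; exact hmw_mem.2⟩)
          have h2 : (Finset.univ.filter fun q : Fin n => p < q ∧ w q ≠ 0).min' hFwne
              ≤ (Finset.univ.filter fun q : Fin n => p < q ∧ α q ≠ 0).min' hFvne :=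
            Finset.min'_le _ _ (by
              simp only [Finset.mem_filter, Finset.mem_univ, true_and]
              exact ⟨hmv_mem.1, by rw [hwmv]; exact hmv_mem.2⟩)
          have heq := le_antisymm h1 h2
          rw [← heq, hwmv]
        · push_neg at hex
          have hmv : (Finset.univ.filter fun q : Fin n => p < q ∧ α q ≠ 0).min' hFvne
              = ⟨i + 1, hi⟩ := by
            refine min'_eq hFv ?_ hFvne
            intro b hb
            simp only [Finset.mem_filter, Finset.mem_univ, true_and] at hb
            have hbi : i ≤ (b : ℕ) := hex b hb
            have hbne : (b : ℕ) ≠ i := by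
              intro hbeq
              have : b = ⟨i, by omega⟩ := Fin.ext hbeq
              rw [this, hz] at hb
              exact hb.2 rfl
            simp only [Fin.le_def]; omega
          have hmw : (Finset.univ.filter fun q : Fin n => p < q ∧ w q ≠ 0).min' hFwne
              = ⟨i, by omega⟩ := by
            refine min'_eq hFw ?_ hFwne
            intro b hb
            simp only [Finset.mem_filter, Finset.mem_univ, true_and] at hb
            have hbi : i ≤ (b : ℕ) := by
              by_cases hbl : (b : ℕ) < i
              · exact absurd (hex b ⟨hb.1, by rw [← hw b (by omega) (by omega)]; exact hb.2⟩) (by omega)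
              · omega
            simp only [Fin.le_def]; omega
          rw [hmv, hmw, hwi]
      rw [key]
    · push_neg at hc
      rw [qshift_zero_bad w p (by rw [hwp]; exact hzp) hc.1 hlt (by rw [hnb]; exact hc.2),
        qshift_zero_bad α p hzp hc.1 hlt hc.2]
  · by_cases hc : (p : ℕ) = 0 ∨ α ⟨(p : ℕ) - 1, hlt⟩ ≠ 0
    · have hcw : (p : ℕ) = 0 ∨ w ⟨(p : ℕ) - 1, hlt⟩ ≠ 0 := by
        rcases hc with h | h
        · exact Or.inl h
        · exact Or.inr (by rw [hnb]; exact h)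
      rw [qshift_pos_good w p (by rw [hwp]; exact hzp) hcw, qshift_pos_good α p hzp hc, hwp]
    · push_neg at hc
      rw [qshift_pos_bad w p (by rw [hwp]; exact hzp) hc.1 hlt (by rw [hnb]; exact hc.2),
        qshift_pos_bad α p hzp hc.1 hlt hc.2]


end Pointwise
end SQAux

section PW2
open SQAux
variable {n : ℕ} (i : ℕ) (hi : i + 1 < n) (α w : Fin n → ℕ)

lemma Q_i (hz : α ⟨i, Nat.lt_of_succ_lt hi⟩ = 0) (ha : α ⟨i + 1, hi⟩ ≠ 0)
    (hwi : w ⟨i, Nat.lt_of_succ_lt hi⟩ = α ⟨i + 1, hi⟩)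
    (hw : ∀ p : Fin n, (p : ℕ) ≠ i → (p : ℕ) ≠ i + 1 → w p = α p) :
    qshift n w ⟨i, Nat.lt_of_succ_lt hi⟩ = qshift n α ⟨i, Nat.lt_of_succ_lt hi⟩ + 1 := by
  have hlt : i - 1 < n := by omega
  by_cases hc : i = 0 ∨ α ⟨i - 1, hlt⟩ ≠ 0
  · have hcw : i = 0 ∨ w ⟨i - 1, hlt⟩ ≠ 0 := by
      rcases hc with h | h
      · exact Or.inl h
      · have hi0 : i ≠ 0 := by
          rintro rfl
          exact h hz
        exact Or.inr (by rw [hw _ (by simp only [Fin.val_mk]; omega) (by simp only [Fin.val_mk]; omega)]; exact h)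
    have e1 : qshift n w ⟨i, by omega⟩ = w ⟨i, by omega⟩ :=
      qshift_pos_good w _ (by rw [hwi]; exact ha) hcw
    have e2 : qshift n α ⟨i, by omega⟩ = α ⟨i + 1, hi⟩ - 1 := by
      rw [qshift_zero_good α _ hz hc]
      have hF : (⟨i + 1, hi⟩ : Fin n)
          ∈ Finset.univ.filter fun q : Fin n => (⟨i, by omega⟩ : Fin n) < q ∧ α q ≠ 0 := by
        simp only [Finset.mem_filter, Finset.mem_univ, true_and]
        exact ⟨by simp [Fin.lt_def], ha⟩
      have hne : (Finset.univ.filter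
          fun q : Fin n => (⟨i, by omega⟩ : Fin n) < q ∧ α q ≠ 0).Nonempty := ⟨_, hF⟩
      rw [dif_pos hne, min'_eq hF ?_ hne]
      intro b hb
      simp only [Finset.mem_filter, Finset.mem_univ, true_and, Fin.lt_def] at hb
      simp only [Fin.le_def]
      omega
    rw [e1, e2, hwi]
    have := Nat.pos_of_ne_zero ha
    omega
  · push_neg at hc
    have e1 : qshift n w ⟨i, by omega⟩ = 1 :=
      qshift_pos_bad w _ (by rw [hwi]; exact ha) hc.1 hlt
        (by rw [hw _ (by simp only [Fin.val_mk]; omega) (by simp only [Fin.val_mk]; omega)]; exact hc.2)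
    have e2 : qshift n α ⟨i, by omega⟩ = 0 := qshift_zero_bad α _ hz hc.1 hlt hc.2
    rw [e1, e2]

lemma Q_i1 (hz : α ⟨i, Nat.lt_of_succ_lt hi⟩ = 0) (ha : α ⟨i + 1, hi⟩ ≠ 0) :
    qshift n α ⟨i + 1, hi⟩ = 1 :=
  qshift_pos_bad α _ ha (by simp) (by simp only [Fin.val_mk]; omega) hz

lemma Qw_i1_val (ha : α ⟨i + 1, hi⟩ ≠ 0)
    (hwi : w ⟨i, Nat.lt_of_succ_lt hi⟩ = α ⟨i + 1, hi⟩) (hwi1 : w ⟨i + 1, hi⟩ = 0) :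
    qshift n w ⟨i + 1, hi⟩
      = if h : (Finset.univ.filter
            fun q : Fin n => (⟨i + 1, hi⟩ : Fin n) < q ∧ w q ≠ 0).Nonempty then
          w ((Finset.univ.filter
            fun q : Fin n => (⟨i + 1, hi⟩ : Fin n) < q ∧ w q ≠ 0).min' h) - 1
        else 0 :=
  qshift_zero_good w _ hwi1 (Or.inr (ne_of_eq_of_ne hwi ha))

lemma Q_last (hlast : n = i + 2) (ha : α ⟨i + 1, hi⟩ ≠ 0)
    (hwi : w ⟨i, Nat.lt_of_succ_lt hi⟩ = α ⟨i + 1, hi⟩) (hwi1 : w ⟨i + 1, hi⟩ = 0) :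
    qshift n w ⟨i + 1, hi⟩ = 0 := by
  rw [Qw_i1_val i hi α w ha hwi hwi1, dif_neg]
  rintro ⟨q, hq⟩
  simp only [Finset.mem_filter, Finset.mem_univ, true_and, Fin.lt_def, Fin.val_mk] at hq
  have := q.isLt
  omega

lemma Q_i2 (hi2 : i + 2 < n) (hz : α ⟨i, Nat.lt_of_succ_lt hi⟩ = 0) (ha : α ⟨i + 1, hi⟩ ≠ 0)
    (hwi : w ⟨i, Nat.lt_of_succ_lt hi⟩ = α ⟨i + 1, hi⟩) (hwi1 : w ⟨i + 1, hi⟩ = 0)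
    (hw : ∀ p : Fin n, (p : ℕ) ≠ i → (p : ℕ) ≠ i + 1 → w p = α p) :
    qshift n α ⟨i + 2, hi2⟩ = qshift n w ⟨i + 1, hi⟩ + qshift n w ⟨i + 2, hi2⟩ := by
  have hww2 : w ⟨i + 2, hi2⟩ = α ⟨i + 2, hi2⟩ :=
    hw _ (by simp only [Fin.val_mk]; omega) (by simp only [Fin.val_mk]; omega)
  have hnb : (⟨i + 2 - 1, by omega⟩ : Fin n) = (⟨i + 1, hi⟩ : Fin n) := rfl
  by_cases hz2 : α ⟨i + 2, hi2⟩ = 0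
  · have e2 : qshift n w ⟨i + 2, hi2⟩ = 0 :=
      qshift_zero_bad w _ (by rw [hww2]; exact hz2) (by simp)
        (by simp only [Fin.val_mk]; omega) hwi1
    have e1 : qshift n α ⟨i + 2, hi2⟩
        = if h : (Finset.univ.filter
              fun q : Fin n => (⟨i + 2, hi2⟩ : Fin n) < q ∧ α q ≠ 0).Nonempty then
            α ((Finset.univ.filter
              fun q : Fin n => (⟨i + 2, hi2⟩ : Fin n) < q ∧ α q ≠ 0).min' h) - 1
          else 0 :=
      qshift_zero_good α _ hz2 (Or.inr ha)
    have e0 := Qw_i1_val i hi α w ha hwi hwi1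
    have hFeq : (Finset.univ.filter fun q : Fin n => (⟨i + 1, hi⟩ : Fin n) < q ∧ w q ≠ 0)
        = Finset.univ.filter fun q : Fin n => (⟨i + 2, hi2⟩ : Fin n) < q ∧ α q ≠ 0 := by
      ext q
      simp only [Finset.mem_filter, Finset.mem_univ, true_and, Fin.lt_def]
      constructor
      · rintro ⟨hq, hq2⟩
        have hne2 : (q : ℕ) ≠ i + 2 := by
          intro heq
          have : q = ⟨i + 2, hi2⟩ := Fin.ext heq
          rw [this, hww2, hz2] at hq2
          exact hq2 rfl
        exact ⟨by omega, by rw [← hw q (by omega) (by omega)]; exact hq2⟩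
      · rintro ⟨hq, hq2⟩
        exact ⟨by omega, by rw [hw q (by omega) (by omega)]; exact hq2⟩
    rw [e1, e2, e0, hFeq]
    by_cases hne : (Finset.univ.filter
        fun q : Fin n => (⟨i + 2, hi2⟩ : Fin n) < q ∧ α q ≠ 0).Nonempty
    · rw [dif_pos hne, dif_pos hne]
      have hm := Finset.min'_mem _ hne
      rw [Finset.mem_filter] at hm
      have hmv : i + 2 < (((Finset.univ.filter
          fun q : Fin n => (⟨i + 2, hi2⟩ : Fin n) < q ∧ α q ≠ 0).min' hne : Fin n) : ℕ) :=
        hm.2.1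
      rw [hw _ (by omega) (by omega)]
      omega
    · rw [dif_neg hne, dif_neg hne]
  · have e2 : qshift n w ⟨i + 2, hi2⟩ = 1 :=
      qshift_pos_bad w _ (by rw [hww2]; exact hz2) (by simp)
        (by simp only [Fin.val_mk]; omega) hwi1
    have e1 : qshift n α ⟨i + 2, hi2⟩ = α ⟨i + 2, hi2⟩ :=
      qshift_pos_good α _ hz2 (Or.inr ha)
    have e0 : qshift n w ⟨i + 1, hi⟩ = α ⟨i + 2, hi2⟩ - 1 := by
      rw [Qw_i1_val i hi α w ha hwi hwi1]
      have hF : (⟨i + 2, hi2⟩ : Fin n)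
          ∈ Finset.univ.filter fun q : Fin n => (⟨i + 1, hi⟩ : Fin n) < q ∧ w q ≠ 0 := by
        simp only [Finset.mem_filter, Finset.mem_univ, true_and, Fin.lt_def]
        exact ⟨by omega, by rw [hww2]; exact hz2⟩
      have hne : (Finset.univ.filter
          fun q : Fin n => (⟨i + 1, hi⟩ : Fin n) < q ∧ w q ≠ 0).Nonempty := ⟨_, hF⟩
      rw [dif_pos hne, min'_eq hF ?_ hne, hww2]
      intro b hb
      simp only [Finset.mem_filter, Finset.mem_univ, true_and, Fin.lt_def] at hb
      simp only [Fin.le_def]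
      omega
    rw [e1, e2, e0]
    have := Nat.pos_of_ne_zero hz2
    omega

end PW2

section MainAux
open SQAux

lemma main_aux (n i : ℕ) (hi : i + 1 < n) (hii : i < n) (α w γ β : Fin n → ℕ)
    (hαi : α ⟨i, hii⟩ = 0)
    (hwi : w ⟨i, hii⟩ = α ⟨i + 1, hi⟩) (hwi1 : w ⟨i + 1, hi⟩ = 0)
    (hw : ∀ p : Fin n, (p : ℕ) ≠ i → (p : ℕ) ≠ i + 1 → w p = α p)
    (h1 : ∀ j : Fin n, S w j ≤ S γ j) (h2 : ∀ j : Fin n, S γ j ≤ S (qshift n w) j)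
    (h3 : γ ⟨i + 1, hi⟩ = 0) (h4 : 0 < γ ⟨i, hii⟩)
    (h5 : ∀ j : Fin n, (j : ℕ) ≠ i → (j : ℕ) ≠ i + 1 → β j = γ j)
    (h6 : β ⟨i, hii⟩ ≤ γ ⟨i, hii⟩ - 1)
    (h7 : β ⟨i + 1, hi⟩ = γ ⟨i, hii⟩ - β ⟨i, hii⟩) :
    (∀ j : Fin n, S α j ≤ S β j) ∧ (∀ j : Fin n, S β j ≤ S (qshift n α) j) := by
  have hβsum : β ⟨i, hii⟩ + β ⟨i + 1, hi⟩ = γ ⟨i, hii⟩ + γ ⟨i + 1, hi⟩ := by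
    rw [h7, h3]; omega
  have hne01 : (⟨i, hii⟩ : Fin n) ≠ ⟨i + 1, hi⟩ := by
    simp only [ne_eq, Fin.mk.injEq]; omega
  -- partial sums of β agree with those of γ away from position i
  have hβγ : ∀ j : Fin n, (j : ℕ) ≠ i → S β j = S γ j := by
    intro j hj
    rcases lt_or_gt_of_ne hj with hlt' | hgt
    · exact S_congr _ _ _ fun p hp => h5 p (by simp only [Fin.le_def] at hp; omega)
        (by simp only [Fin.le_def] at hp; omega)
    · refine S_pair β γ j ⟨i, hii⟩ ⟨i + 1, hi⟩ hne01
        (by simp only [Fin.le_def, Fin.val_mk]; omega)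
        (by simp only [Fin.le_def, Fin.val_mk]; omega) ?_ hβsum
      intro p _ hpa hpb
      exact h5 p (by simp only [ne_eq, Fin.ext_iff, Fin.val_mk] at hpa ⊢; exact hpa)
        (by simp only [ne_eq, Fin.ext_iff, Fin.val_mk] at hpb ⊢; exact hpb)
  -- partial sums of α agree with those of w away from position i
  have hαw : ∀ j : Fin n, (j : ℕ) ≠ i → S α j = S w j := by
    intro j hj
    rcases lt_or_gt_of_ne hj with hlt' | hgt
    · exact S_congr _ _ _ fun p hp => (hw p (by simp only [Fin.le_def] at hp; omega)
        (by simp only [Fin.le_def] at hp; omega)).symm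
    · refine S_pair α w j ⟨i, hii⟩ ⟨i + 1, hi⟩ hne01
        (by simp only [Fin.le_def, Fin.val_mk]; omega)
        (by simp only [Fin.le_def, Fin.val_mk]; omega) ?_ ?_
      · intro p _ hpa hpb
        exact (hw p (by simp only [ne_eq, Fin.ext_iff, Fin.val_mk] at hpa ⊢; exact hpa)
          (by simp only [ne_eq, Fin.ext_iff, Fin.val_mk] at hpb ⊢; exact hpb)).symm
      · rw [hαi, hwi, hwi1]; omega
  constructor
  · -- Dom α β
    intro j
    by_cases hj : (j : ℕ) = i
    · have hjeq : j = ⟨i, hii⟩ := Fin.ext hj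
      rw [hjeq]
      rcases Nat.eq_zero_or_pos i with hi0 | hipos
      · subst hi0
        rw [S_zero α (by omega), hαi]
        exact Nat.zero_le _
      · have hi1n : i - 1 < n := by omega
        have e1 : S α ⟨i, hii⟩ = S α ⟨i - 1, hi1n⟩ + α ⟨i, hii⟩ := S_pred α i (by omega) hii
        have e2 : S β ⟨i, hii⟩ = S β ⟨i - 1, hi1n⟩ + β ⟨i, hii⟩ := S_pred β i (by omega) hii
        have e3 : S α ⟨i - 1, hi1n⟩ = S w ⟨i - 1, hi1n⟩ :=
          hαw _ (by simp only [Fin.val_mk]; omega)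
        have e4 := h1 ⟨i - 1, hi1n⟩
        have e5 : S β ⟨i - 1, hi1n⟩ = S γ ⟨i - 1, hi1n⟩ :=
          hβγ _ (by simp only [Fin.val_mk]; omega)
        rw [hαi] at e1
        omega
    · calc S α j = S w j := hαw j hj
        _ ≤ S γ j := h1 j
        _ = S β j := (hβγ j hj).symm
  · -- Dom β (qshift α)
    by_cases haz : α ⟨i + 1, hi⟩ = 0
    · -- degenerate case : w = α
      have hwα : w = α := by
        funext p
        by_cases hp1 : (p : ℕ) = i
        · rw [show p = ⟨i, hii⟩ from Fin.ext hp1, hwi, haz, hαi]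
        by_cases hp2 : (p : ℕ) = i + 1
        · rw [show p = ⟨i + 1, hi⟩ from Fin.ext hp2, hwi1, haz]
        · exact hw p hp1 hp2
      subst hwα
      intro j
      by_cases hj : (j : ℕ) = i
      · rw [show j = ⟨i, hii⟩ from Fin.ext hj]
        have hs : S β ⟨i, hii⟩ + γ ⟨i, hii⟩ = S γ ⟨i, hii⟩ + β ⟨i, hii⟩ := by
          refine S_single β γ _ _ le_rfl ?_
          intro p hp hne
          simp only [ne_eq, Fin.ext_iff, Fin.val_mk] at hne
          simp only [Fin.le_def, Fin.val_mk] at hp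
          exact h5 p (by omega) (by omega)
        have h2i := h2 (⟨i, hii⟩ : Fin n)
        omega
      · calc S β j = S γ j := hβγ j hj
          _ ≤ S (qshift n w) j := h2 j
    · -- main case
      have hQlt : ∀ p : Fin n, (p : ℕ) < i → qshift n w p = qshift n α p :=
        Q_lt i hi α w hαi haz hwi hwi1 hw
      have hQi : qshift n w ⟨i, hii⟩ = qshift n α ⟨i, hii⟩ + 1 :=
        Q_i i hi α w hαi haz hwi hw
      have hQi1 : qshift n α ⟨i + 1, hi⟩ = 1 := Q_i1 i hi α hαi haz
      have hQgt : ∀ p : Fin n, i + 2 < (p : ℕ) → qshift n w p = qshift n α p := by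
        intro p hp
        refine qshift_congr α w p (hw p (by omega) (by omega)) (by omega)
          (hw _ (by simp only [Fin.val_mk]; omega) (by simp only [Fin.val_mk]; omega)) ?_
        intro q hq
        simp only [Fin.lt_def] at hq
        exact hw q (by omega) (by omega)
      have hSQlt : ∀ j : Fin n, (j : ℕ) < i → S (qshift n w) j = S (qshift n α) j := by
        intro j hj
        exact S_congr _ _ _ fun p hp => hQlt p (by simp only [Fin.le_def] at hp; omega)
      have hSQi : S (qshift n w) ⟨i, hii⟩ = S (qshift n α) ⟨i, hii⟩ + 1 := by
        have hs : S (qshift n w) ⟨i, hii⟩ + qshift n α ⟨i, hii⟩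
            = S (qshift n α) ⟨i, hii⟩ + qshift n w ⟨i, hii⟩ := by
          refine S_single _ _ _ _ le_rfl ?_
          intro p hp hne
          simp only [ne_eq, Fin.ext_iff, Fin.val_mk] at hne
          simp only [Fin.le_def, Fin.val_mk] at hp
          exact hQlt p (by omega)
        omega
      have hSQi1 : S (qshift n α) ⟨i + 1, hi⟩ = S (qshift n α) ⟨i, hii⟩ + 1 := by
        have h := S_pred (qshift n α) (i + 1) (by omega) hi
        rw [hQi1] at h
        exact h
      have hSQge : ∀ j : Fin n, i + 2 ≤ (j : ℕ) → S (qshift n w) j = S (qshift n α) j := by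
        intro j hj
        have hi2 : i + 2 < n := lt_of_le_of_lt hj j.isLt
        have hQi2 : qshift n α ⟨i + 2, hi2⟩
            = qshift n w ⟨i + 1, hi⟩ + qshift n w ⟨i + 2, hi2⟩ :=
          Q_i2 i hi α w hi2 hαi haz hwi hwi1 hw
        refine S_triple (qshift n w) (qshift n α) j ⟨i, hii⟩ ⟨i + 1, hi⟩ ⟨i + 2, hi2⟩
          (by simp only [ne_eq, Fin.mk.injEq]; omega)
          (by simp only [ne_eq, Fin.mk.injEq]; omega)
          (by simp only [ne_eq, Fin.mk.injEq]; omega)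
          (by simp only [Fin.le_def, Fin.val_mk]; omega)
          (by simp only [Fin.le_def, Fin.val_mk]; omega)
          (by simp only [Fin.le_def, Fin.val_mk]; omega) ?_ (by omega)
        intro p _ hp1 hp2 hp3
        simp only [ne_eq, Fin.ext_iff, Fin.val_mk] at hp1 hp2 hp3
        rcases lt_or_gt_of_ne hp1 with h | h
        · exact hQlt p h
        · exact hQgt p (by omega)
      intro j
      rcases lt_trichotomy ((j : ℕ)) i with hj | hj | hj
      · calc S β j = S γ j := hβγ j (by omega)
          _ ≤ S (qshift n w) j := h2 j
          _ = S (qshift n α) j := hSQlt j hj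
      · rw [show j = ⟨i, hii⟩ from Fin.ext hj]
        have hs : S β ⟨i, hii⟩ + γ ⟨i, hii⟩ = S γ ⟨i, hii⟩ + β ⟨i, hii⟩ := by
          refine S_single β γ _ _ le_rfl ?_
          intro p hp hne
          simp only [ne_eq, Fin.ext_iff, Fin.val_mk] at hne
          simp only [Fin.le_def, Fin.val_mk] at hp
          exact h5 p (by omega) (by omega)
        have h2i := h2 (⟨i, hii⟩ : Fin n)
        omega
      · by_cases hj1 : (j : ℕ) = i + 1
        · rw [show j = ⟨i + 1, hi⟩ from Fin.ext hj1]
          have e1 : S β ⟨i + 1, hi⟩ = S γ ⟨i + 1, hi⟩ :=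
            hβγ _ (by simp only [Fin.val_mk]; omega)
          have e2 : S γ ⟨i + 1, hi⟩ = S γ ⟨i, hii⟩ + γ ⟨i + 1, hi⟩ :=
            S_pred γ (i + 1) (by omega) hi
          have h2i := h2 (⟨i, hii⟩ : Fin n)
          rw [h3] at e2
          omega
        · have hge : i + 2 ≤ (j : ℕ) := by omega
          calc S β j = S γ j := hβγ j (by omega)
            _ ≤ S (qshift n w) j := h2 j
            _ = S (qshift n α) j := hSQge j hge

end MainAux

/-- Lemma 6 of the paper: let `α` be a weak composition with
`αᵢ = 0`, and let `γ` satisfy `s̃ᵢ(α) ⊴ γ ⊴ qshift(s̃ᵢ(α))` with `γᵢ₊₁ = 0` and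
`γᵢ > 0`.  Then any weak composition `β` with `βⱼ = γⱼ` for `j ∉ {i, i+1}`,
`0 ≤ βᵢ ≤ γᵢ − 1`, and `βᵢ₊₁ = γᵢ − βᵢ` satisfies `α ⊴ β ⊴ qshift(α)`.
Since `αᵢ = 0`, Hivert's swap `s̃ᵢ(α)` is just `α` with entries `i, i+1`
exchanged. -/
theorem lemma_siqshift2 (n i : ℕ) (hi : i + 1 < n) (α γ β : Fin n → ℕ)
    (h0 : α ⟨i, by omega⟩ = 0)
    (h1 : Dom n (α ∘ Equiv.swap (⟨i, by omega⟩ : Fin n) ⟨i + 1, hi⟩) γ)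
    (h2 : Dom n γ (qshift n (α ∘ Equiv.swap (⟨i, by omega⟩ : Fin n) ⟨i + 1, hi⟩)))
    (h3 : γ ⟨i + 1, hi⟩ = 0) (h4 : 0 < γ ⟨i, by omega⟩)
    (h5 : ∀ j : Fin n, j ≠ ⟨i, by omega⟩ → j ≠ ⟨i + 1, hi⟩ → β j = γ j)
    (h6 : β ⟨i, by omega⟩ ≤ γ ⟨i, by omega⟩ - 1)
    (h7 : β ⟨i + 1, hi⟩ = γ ⟨i, by omega⟩ - β ⟨i, by omega⟩) :
    Dom n α β ∧ Dom n β (qshift n α) := by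
  have hii : i < n := by omega
  have hwi : (α ∘ Equiv.swap (⟨i, by omega⟩ : Fin n) ⟨i + 1, hi⟩) ⟨i, hii⟩
      = α ⟨i + 1, hi⟩ := by
    simp only [Function.comp_apply]
    rw [show Equiv.swap (⟨i, by omega⟩ : Fin n) ⟨i + 1, hi⟩ ⟨i, hii⟩ = ⟨i + 1, hi⟩ from
      Equiv.swap_apply_left _ _]
  have hwi1 : (α ∘ Equiv.swap (⟨i, by omega⟩ : Fin n) ⟨i + 1, hi⟩) ⟨i + 1, hi⟩ = 0 := by
    simp only [Function.comp_apply, Equiv.swap_apply_right]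
    exact h0
  have hw : ∀ p : Fin n, (p : ℕ) ≠ i → (p : ℕ) ≠ i + 1 →
      (α ∘ Equiv.swap (⟨i, by omega⟩ : Fin n) ⟨i + 1, hi⟩) p = α p := by
    intro p hp1 hp2
    simp only [Function.comp_apply]
    rw [Equiv.swap_apply_of_ne_of_ne
      (by simp only [ne_eq, Fin.ext_iff, Fin.val_mk]; exact hp1)
      (by simp only [ne_eq, Fin.ext_iff, Fin.val_mk]; exact hp2)]
  have h5' : ∀ j : Fin n, (j : ℕ) ≠ i → (j : ℕ) ≠ i + 1 → β j = γ j := by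
    intro j hj1 hj2
    exact h5 j (by simp only [ne_eq, Fin.ext_iff, Fin.val_mk]; exact hj1)
      (by simp only [ne_eq, Fin.ext_iff, Fin.val_mk]; exact hj2)
  obtain ⟨g1, g2⟩ := main_aux n i hi hii α
    (α ∘ Equiv.swap (⟨i, by omega⟩ : Fin n) ⟨i + 1, hi⟩) γ β h0 hwi hwi1 hw
    h1 h2 h3 h4 h5' h6 h7
  exact ⟨g1, g2⟩
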